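/- For a squarefree positive integer q, the sum ∑_{p | q} √p · log(p)/(p - 1) over prime divisors p of q is ≪ log(1 + q) with an absolute implied constant. -/

import Mathlib

/-- For a squarefree positive integer `q`, `∑_{p | q} √p·log(p)/(p - 1) ≪ log(1 + q)`
with an absolute implied constant. -/
theorem stmt_5 : ∃ C : ℝ, 0 < C ∧ ∀ q : ℕ, 0 < q → Squarefree q →
    ∑ p ∈ q.primeFactors, Real.sqrt p * Real.log p / ((p : ℝ) - 1)
      ≤ C * Real.log (1 + (q : ℝ)) := by
  refine ⟨2, by norm_num, fun q hq hsq => ?_⟩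
  have h1 : ∑ p ∈ q.primeFactors, Real.sqrt p * Real.log p / ((p : ℝ) - 1)
      ≤ ∑ p ∈ q.primeFactors, 2 * Real.log p := by
    apply Finset.sum_le_sum
    intro p hp
    have hp' : p.Prime := Nat.prime_of_mem_primeFactors hp
    have h2 : (2 : ℝ) ≤ (p : ℝ) := by exact_mod_cast hp'.two_le
    have hlog : 0 ≤ Real.log p := Real.log_nonneg (by linarith)
    have hsub : (0 : ℝ) < (p : ℝ) - 1 := by linarith
    rw [div_le_iff₀ hsub]
    have hsqrt : Real.sqrt p ≤ (p : ℝ) := by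
      have := Real.sqrt_le_sqrt (show (p:ℝ) ≤ (p:ℝ)^2 by nlinarith)
      simpa [Real.sqrt_sq (by linarith : (0:ℝ) ≤ (p:ℝ))] using this
    have : Real.sqrt p ≤ 2 * ((p : ℝ) - 1) := by linarith
    nlinarith [Real.sqrt_nonneg (p:ℝ)]
  have hprod : ∑ p ∈ q.primeFactors, Real.log p = Real.log q := by
    rw [← Real.log_prod (fun p hp => by
      exact_mod_cast (Nat.prime_of_mem_primeFactors hp).pos.ne')]
    rw [← Nat.cast_prod, Nat.prod_primeFactors_of_squarefree hsq]
  have hle : Real.log q ≤ Real.log (1 + q) := by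
    apply Real.log_le_log (by exact_mod_cast hq)
    linarith
  calc _ ≤ ∑ p ∈ q.primeFactors, 2 * Real.log p := h1
    _ = 2 * Real.log q := by rw [← Finset.mul_sum, hprod]
    _ ≤ 2 * Real.log (1 + q) := by linarith
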